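/- Let H₁, H₂ be complex Hilbert spaces, Π : H₁ → H₁ an orthogonal projection, and A : H₁ → H₂ a bijective bounded antilinear isometry. Define Q : H₁ ⊕ H₂ → H₁ ⊕ H₂ by Q(ψ ⊕ φ) := Πψ ⊕ (φ − A Π A⁻¹ φ). Then Q is a bounded self-adjoint operator with 0 ≤ Q ≤ 1, and moreover Q is a projection (Q² = Q). -/
import Mathlib


open scoped ComplexConjugate

local notation "⟪" x ", " y "⟫" => @inner ℂ _ _ x y

/-- For an orthogonal projection `Pj` on `H₁` and a bijective bounded antilinear isometry
`A : H₁ → H₂` (with inverse `B`), the operator `Q(ψ ⊕ φ) := Pjψ ⊕ (φ - A Pj A⁻¹ φ)` on `H₁ ⊕ H₂`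
is bounded, self-adjoint, satisfies `0 ≤ Q ≤ 1`, and is a projection. -/
theorem stmt_4 {H₁ H₂ : Type*}
    [NormedAddCommGroup H₁] [InnerProductSpace ℂ H₁] [CompleteSpace H₁]
    [NormedAddCommGroup H₂] [InnerProductSpace ℂ H₂] [CompleteSpace H₂]
    (Pj : H₁ →L[ℂ] H₁) (hPjsa : IsSelfAdjoint Pj) (hPjidem : Pj.comp Pj = Pj)
    (A : H₁ → H₂) (B : H₂ → H₁)
    (hAB : ∀ φ : H₂, A (B φ) = φ) (hBA : ∀ ψ : H₁, B (A ψ) = ψ)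
    (hAadd : ∀ ψ ψ' : H₁, A (ψ + ψ') = A ψ + A ψ')
    (hAsmul : ∀ (c : ℂ) (ψ : H₁), A (c • ψ) = conj c • A ψ)
    (hAanti : ∀ ψ ψ' : H₁, ⟪A ψ, A ψ'⟫ = ⟪ψ', ψ⟫) :
    let Q : H₁ × H₂ → H₁ × H₂ := fun p => (Pj p.1, p.2 - A (Pj (B p.2)))
    (∀ p q : H₁ × H₂, ⟪(Q p).1, q.1⟫ + ⟪(Q p).2, q.2⟫ = ⟪p.1, (Q q).1⟫ + ⟪p.2, (Q q).2⟫) ∧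
    (∀ p : H₁ × H₂, 0 ≤ (⟪p.1, (Q p).1⟫ + ⟪p.2, (Q p).2⟫).re) ∧
    (∀ p : H₁ × H₂, (⟪p.1, (Q p).1⟫ + ⟪p.2, (Q p).2⟫).re ≤ ‖p.1‖ ^ 2 + ‖p.2‖ ^ 2) ∧
    (∀ p : H₁ × H₂, Q (Q p) = Q p) ∧
    (∃ M : ℝ, 0 ≤ M ∧ ∀ p : H₁ × H₂,
      ‖(Q p).1‖ ^ 2 + ‖(Q p).2‖ ^ 2 ≤ M * (‖p.1‖ ^ 2 + ‖p.2‖ ^ 2)) := by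
  intro Q
  have hsa : ∀ x y : H₁, ⟪Pj x, y⟫ = ⟪x, Pj y⟫ := fun x y => by
    conv_lhs => rw [← hPjsa.adjoint_eq]
    exact ContinuousLinearMap.adjoint_inner_left Pj y x
  have hPj2 : ∀ x : H₁, Pj (Pj x) = Pj x := fun x => by
    rw [← ContinuousLinearMap.comp_apply, hPjidem]
  have hnorm1 : ∀ x : H₁, (⟪x, x⟫).re = ‖x‖ ^ 2 := fun x => by
    simpa using inner_self_eq_norm_sq (𝕜 := ℂ) x
  have hnorm2 : ∀ x : H₂, (⟪x, x⟫).re = ‖x‖ ^ 2 := fun x => by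
    simpa using inner_self_eq_norm_sq (𝕜 := ℂ) x
  have hAnorm : ∀ ψ : H₁, ‖A ψ‖ = ‖ψ‖ := fun ψ => by
    have h := congrArg Complex.re (hAanti ψ ψ)
    rw [hnorm2, hnorm1] at h
    nlinarith [norm_nonneg (A ψ), norm_nonneg ψ]
  have hBnorm : ∀ φ : H₂, ‖B φ‖ = ‖φ‖ := fun φ => by
    rw [← hAnorm (B φ), hAB]
  have hinner1 : ∀ x : H₁, ⟪x, Pj x⟫ = ⟪Pj x, Pj x⟫ := fun x => by
    conv_lhs => rw [← hPj2 x]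
    exact (hsa _ _).symm
  have hPjle : ∀ x : H₁, ‖Pj x‖ ≤ ‖x‖ := fun x => by
    have h2 : (‖Pj x‖ : ℝ) ^ 2 = (⟪x, Pj x⟫).re := by
      rw [hinner1, hnorm1]
    have h3 : (⟪x, Pj x⟫).re ≤ ‖x‖ * ‖Pj x‖ := by
      calc (⟪x, Pj x⟫).re ≤ ‖⟪x, Pj x⟫‖ := Complex.re_le_norm _
        _ ≤ ‖x‖ * ‖Pj x‖ := norm_inner_le_norm _ _
    nlinarith [norm_nonneg (Pj x), norm_nonneg x]
  have hinner2 : ∀ φ : H₂, ⟪φ, A (Pj (B φ))⟫ = ⟪Pj (B φ), Pj (B φ)⟫ := fun φ => by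
    calc ⟪φ, A (Pj (B φ))⟫ = ⟪A (B φ), A (Pj (B φ))⟫ := by rw [hAB]
      _ = ⟪Pj (B φ), B φ⟫ := hAanti _ _
      _ = ⟪B φ, Pj (B φ)⟫ := hsa _ _
      _ = _ := hinner1 _
  have hA0 : A 0 = 0 := by
    have := hAsmul 0 0
    simpa using this
  have hcross : ∀ φ χ : H₂, ⟪A (Pj (B φ)), χ⟫ = ⟪φ, A (Pj (B χ))⟫ := fun φ χ => by
    calc ⟪A (Pj (B φ)), χ⟫ = ⟪A (Pj (B φ)), A (B χ)⟫ := by rw [hAB]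
      _ = ⟪B χ, Pj (B φ)⟫ := hAanti _ _
      _ = ⟪Pj (B χ), B φ⟫ := by rw [hsa]
      _ = ⟪A (B φ), A (Pj (B χ))⟫ := (hAanti _ _).symm
      _ = ⟪φ, A (Pj (B χ))⟫ := by rw [hAB]
  have hBadd : ∀ x y : H₂, B (x + y) = B x + B y := fun x y => by
    conv_lhs => rw [← hAB x, ← hAB y, ← hAadd, hBA]
  have hAneg : ∀ ψ : H₁, A (-ψ) = -A ψ := fun ψ => by
    rw [← neg_one_smul ℂ ψ, hAsmul]
    simp
  have hBneg : ∀ φ : H₂, B (-φ) = -B φ := fun φ => by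
    conv_lhs => rw [← hAB φ, ← hAneg, hBA]
  have hBsub : ∀ x y : H₂, B (x - y) = B x - B y := fun x y => by
    rw [sub_eq_add_neg, hBadd, hBneg, sub_eq_add_neg]
  refine ⟨?_, ?_, ?_, ?_, ?_⟩
  · intro p q
    simp only [Q]
    rw [hsa]
    congr 1
    rw [inner_sub_left, inner_sub_right, hcross]
  · intro p
    simp only [Q]
    rw [hinner1, inner_sub_right, hinner2]
    have hle : ‖Pj (B p.2)‖ ≤ ‖p.2‖ := (hPjle _).trans_eq (hBnorm _)
    simp only [Complex.add_re, Complex.sub_re, hnorm1, hnorm2]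
    nlinarith [norm_nonneg (Pj p.1), norm_nonneg (Pj (B p.2)), norm_nonneg p.2]
  · intro p
    simp only [Q]
    rw [hinner1, inner_sub_right, hinner2]
    have hle1 : ‖Pj p.1‖ ≤ ‖p.1‖ := hPjle _
    simp only [Complex.add_re, Complex.sub_re, hnorm1, hnorm2]
    nlinarith [norm_nonneg (Pj p.1), norm_nonneg (Pj (B p.2)), norm_nonneg p.1]
  · intro p
    simp only [Q]
    refine Prod.ext (hPj2 _) ?_
    simp only
    have h : B (p.2 - A (Pj (B p.2))) = B p.2 - Pj (B p.2) := by
      rw [hBsub, hBA]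
    rw [h, map_sub, hPj2, sub_self, hA0, sub_zero]
  · refine ⟨4, by norm_num, fun p => ?_⟩
    simp only [Q]
    have h1 : ‖Pj p.1‖ ≤ ‖p.1‖ := hPjle _
    have h2 : ‖A (Pj (B p.2))‖ ≤ ‖p.2‖ := by
      rw [hAnorm]
      exact (hPjle _).trans_eq (hBnorm _)
    have h3 : ‖p.2 - A (Pj (B p.2))‖ ≤ ‖p.2‖ + ‖A (Pj (B p.2))‖ := norm_sub_le _ _
    nlinarith [norm_nonneg (p.2 - A (Pj (B p.2))), norm_nonneg p.2, norm_nonneg (Pj p.1), norm_nonneg p.1, norm_nonneg (A (Pj (B p.2)))]
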